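/- (Spivey's identity) For all positive integers n and j, B_{n+j} = \sum_{k=1}^{n} P_j(k) * S(n,k), where P_j(x) = \sum_{r=0}^{j} B_{j-r} * C(j,r) * x^r. -/

import Mathlib

/-- Stirling numbers of the second kind. -/
def stirling : ℕ → ℕ → ℕ
  | 0, 0 => 1
  | 0, _ + 1 => 0
  | _ + 1, 0 => 0
  | n + 1, k + 1 => stirling n k + (k + 1) * stirling n (k + 1)

/-- The `n`-th Bell number. -/
def bell (n : ℕ) : ℕ := ∑ k ∈ Finset.range (n + 1), stirling n k

lemma stirling_succ_zero (n : ℕ) : stirling (n+1) 0 = 0 := rfl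

lemma stirling_eq_zero_of_lt : ∀ n k, n < k → stirling n k = 0 := by
  intro n
  induction n with
  | zero =>
    intro k h
    match k, h with
    | k + 1, _ => rfl
  | succ n ih =>
    intro k h
    match k, h with
    | k + 1, h =>
      show stirling n k + (k+1) * stirling n (k+1) = 0
      rw [ih k (by omega), ih (k+1) (by omega)]; simp

lemma bell_eq_sum (m i : ℕ) (h : i ≤ m) :
    bell i = ∑ k ∈ Finset.range (m+1), stirling i k := by
  exact Finset.sum_subset (Finset.range_subset_range.2 (by omega))
    (fun x _ hx => stirling_eq_zero_of_lt i x (by simp at hx; omega))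

lemma stirling_succ_eq : ∀ m k, stirling (m+1) (k+1) =
    ∑ i ∈ Finset.range (m+1), Nat.choose m i * stirling i k := by
  intro m
  induction m with
  | zero => intro k; simp [stirling]
  | succ m ih =>
    intro k
    have expand : ∑ i ∈ Finset.range (m+2), Nat.choose (m+1) i * stirling i k
        = (∑ i ∈ Finset.range (m+2), Nat.choose m i * stirling i k)
          + ∑ i ∈ Finset.range (m+1), Nat.choose m i * stirling (i+1) k := by
      rw [Finset.sum_range_succ' (fun i => Nat.choose (m+1) i * stirling i k),
        Finset.sum_range_succ' (fun i => Nat.choose m i * stirling i k)]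
      simp [Nat.choose_succ_succ, Nat.add_mul, Finset.sum_add_distrib]
      ring
    have first : ∑ i ∈ Finset.range (m+2), Nat.choose m i * stirling i k
        = stirling (m+1) (k+1) := by
      rw [Finset.sum_range_succ, Nat.choose_succ_self, ih k]; simp
    rw [expand, first]
    cases k with
    | zero =>
      have : ∑ i ∈ Finset.range (m+1), Nat.choose m i * stirling (i+1) 0 = 0 := by
        apply Finset.sum_eq_zero; intro i _; simp [stirling_succ_zero]
      rw [this]
      show stirling (m+1) 0 + 1 * stirling (m+1) 1 = stirling (m+1) 1 + 0
      rw [stirling_succ_zero]; ring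
    | succ k' =>
      have : ∑ i ∈ Finset.range (m+1), Nat.choose m i * stirling (i+1) (k'+1)
          = (∑ i ∈ Finset.range (m+1), Nat.choose m i * stirling i k')
            + (k'+1) * ∑ i ∈ Finset.range (m+1), Nat.choose m i * stirling i (k'+1) := by
        rw [Finset.mul_sum, ← Finset.sum_add_distrib]
        apply Finset.sum_congr rfl
        intro i _
        show Nat.choose m i * (stirling i k' + (k'+1) * stirling i (k'+1)) = _
        ring
      rw [this, ← ih k', ← ih (k'+1)]
      show stirling (m+1) (k'+1) + (k'+1+1) * stirling (m+1) (k'+1+1) = _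
      ring

lemma bell_succ (m : ℕ) : bell (m+1) = ∑ i ∈ Finset.range (m+1), Nat.choose m i * bell i := by
  have h1 : bell (m+1) = ∑ k ∈ Finset.range (m+1), stirling (m+1) (k+1) := by
    rw [bell, Finset.sum_range_succ' (fun k => stirling (m+1) k), stirling_succ_zero]
    simp
  rw [h1]
  have h2 : ∀ k, stirling (m+1) (k+1) = ∑ i ∈ Finset.range (m+1), Nat.choose m i * stirling i k :=
    stirling_succ_eq m
  simp_rw [h2]
  rw [Finset.sum_comm]
  apply Finset.sum_congr rfl
  intro i hi
  rw [← Finset.mul_sum, ← bell_eq_sum m i (by simp at hi; omega)]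

lemma bell_succ' (m : ℕ) :
    bell (m+1) = ∑ r ∈ Finset.range (m+1), bell (m - r) * Nat.choose m r := by
  rw [bell_succ, ← Finset.sum_range_reflect]
  apply Finset.sum_congr rfl
  intro r hr
  simp only [Finset.mem_range] at hr
  rw [Nat.add_sub_cancel, Nat.choose_symm (by omega), Nat.mul_comm]

lemma key_inner (j s : ℕ) (hs : s ≤ j) :
    ∑ r ∈ Finset.range (j+1), bell (j-r) * Nat.choose j r * Nat.choose r s
      = Nat.choose j s * bell (j - s + 1) := by
  have h0 : ∑ r ∈ Finset.range (j+1), bell (j-r) * Nat.choose j r * Nat.choose r s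
      = ∑ r ∈ Finset.Ico s (j+1), bell (j-r) * Nat.choose j r * Nat.choose r s := by
    symm
    apply Finset.sum_subset
    · intro x hx; simp only [Finset.mem_Ico] at hx; simp; omega
    · intro x _ hx
      simp only [Finset.mem_Ico, not_and, not_lt, Finset.mem_range] at *
      have hxs : x < s := by omega
      rw [Nat.choose_eq_zero_of_lt hxs, Nat.mul_zero]
  rw [h0, Finset.sum_Ico_eq_sum_range]
  have h1 : ∀ t ∈ Finset.range (j + 1 - s),
      bell (j - (s + t)) * Nat.choose j (s + t) * Nat.choose (s + t) s
        = Nat.choose j s * (bell (j - s - t) * Nat.choose (j - s) t) := by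
    intro t ht
    simp only [Finset.mem_range] at ht
    have hst : s + t ≤ j := by omega
    have := Nat.choose_mul (n := j) (Nat.le_add_right s t)
    rw [Nat.add_sub_cancel_left] at this
    rw [Nat.mul_assoc, this, Nat.sub_add_eq]
    ring
  rw [Finset.sum_congr rfl h1, ← Finset.mul_sum]
  congr 1
  have := bell_succ' (j - s)
  rw [this]
  apply Finset.sum_congr
  · congr 1; omega
  · intro r _; rfl

lemma Ppoly_shift (j k : ℕ) :
    ∑ r ∈ Finset.range (j+1), bell (j-r) * Nat.choose j r * (k+1)^r
      = ∑ s ∈ Finset.range (j+1), Nat.choose j s * bell (j - s + 1) * k^s := by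
  have h1 : ∀ r ∈ Finset.range (j+1), bell (j-r) * Nat.choose j r * (k+1)^r
      = ∑ s ∈ Finset.range (j+1), bell (j-r) * Nat.choose j r * Nat.choose r s * k^s := by
    intro r hr
    simp only [Finset.mem_range] at hr
    have hpow : (k+1)^r = ∑ s ∈ Finset.range (r+1), k^s * Nat.choose r s := by
      have := add_pow k 1 r
      simpa using this
    rw [hpow, Finset.mul_sum]
    rw [Finset.sum_subset (Finset.range_subset_range.2 (by omega : r + 1 ≤ j + 1))]
    · apply Finset.sum_congr rfl; intro s _; ring
    · intro x _ hx
      simp only [Finset.mem_range, not_lt] at hx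
      rw [Nat.choose_eq_zero_of_lt (show r < x by omega)]; ring
  rw [Finset.sum_congr rfl h1, Finset.sum_comm]
  apply Finset.sum_congr rfl
  intro s hs
  simp only [Finset.mem_range] at hs
  have : ∀ r ∈ Finset.range (j+1),
      bell (j-r) * Nat.choose j r * Nat.choose r s * k^s
        = (bell (j-r) * Nat.choose j r * Nat.choose r s) * k^s := fun r _ => rfl
  rw [Finset.sum_congr rfl this, ← Finset.sum_mul, key_inner j s (by omega)]

lemma Ppoly_succ (j k : ℕ) :
    ∑ r ∈ Finset.range (j+2), bell (j+1-r) * Nat.choose (j+1) r * k^r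
      = (∑ r ∈ Finset.range (j+1), bell (j-r) * Nat.choose j r * (k+1)^r)
        + k * ∑ r ∈ Finset.range (j+1), bell (j-r) * Nat.choose j r * k^r := by
  rw [Ppoly_shift]
  rw [Finset.sum_range_succ' (fun r => bell (j+1-r) * Nat.choose (j+1) r * k^r)]
  rw [Finset.sum_range_succ' (fun s => Nat.choose j s * bell (j - s + 1) * k^s)]
  simp only [Nat.choose_succ_succ, Nat.sub_zero, Nat.choose_zero_right, Nat.pow_zero]
  have expand : ∑ i ∈ Finset.range (j+1),
      bell (j+1-(i+1)) * (Nat.choose j i + Nat.choose j (i+1)) * k^(i+1)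
      = (∑ i ∈ Finset.range (j+1), bell (j-i) * Nat.choose j i * k^(i+1))
        + ∑ i ∈ Finset.range (j+1), bell (j-i) * Nat.choose j (i+1) * k^(i+1) := by
    rw [← Finset.sum_add_distrib]
    apply Finset.sum_congr rfl
    intro i hi
    simp only [Finset.mem_range] at hi
    have : j + 1 - (i+1) = j - i := by omega
    rw [this]; ring
  rw [expand]
  have e2 : ∑ i ∈ Finset.range (j+1), bell (j-i) * Nat.choose j (i+1) * k^(i+1)
      = ∑ i ∈ Finset.range (j+1), Nat.choose j (i+1) * bell (j - (i+1) + 1) * k^(i+1) := by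
    apply Finset.sum_congr rfl
    intro i hi
    simp only [Finset.mem_range] at hi
    rcases Nat.lt_or_ge i j with h | h
    · have : j - (i+1) + 1 = j - i := by omega
      rw [this]; ring
    · have : i = j := by omega
      subst this
      rw [Nat.choose_succ_self]; ring
  have e3 : k * ∑ r ∈ Finset.range (j+1), bell (j-r) * Nat.choose j r * k^r
      = ∑ i ∈ Finset.range (j+1), bell (j-i) * Nat.choose j i * k^(i+1) := by
    rw [Finset.mul_sum]
    apply Finset.sum_congr rfl
    intro i _; ring
  rw [e2, e3]
  have e5 : ∑ i ∈ Finset.range (j+1), Nat.choose j (i+1) * bell (j - (i+1) + 1) * k^(i+1)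
      = ∑ i ∈ Finset.range j, Nat.choose j (i+1) * bell (j - (i+1) + 1) * k^(i+1) := by
    rw [Finset.sum_range_succ, Nat.choose_succ_self]
    simp
  rw [e5]
  ring

lemma Icc_sum_eq (m : ℕ) (f : ℕ → ℕ) :
    ∑ k ∈ Finset.Icc 1 m, f k = ∑ k ∈ Finset.range m, f (k+1) := by
  rw [show Finset.Icc 1 m = Finset.Ico 1 (m+1) by rfl, Finset.sum_Ico_eq_sum_range]
  simp [Nat.add_comm]

lemma spivey_main : ∀ n j : ℕ,
    ∑ k ∈ Finset.Icc 1 (n+1),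
      (∑ r ∈ Finset.range (j + 1), bell (j - r) * Nat.choose j r * k ^ r) * stirling (n+1) k
      = bell (n + 1 + j) := by
  intro n
  induction n with
  | zero =>
    intro j
    rw [Icc_sum_eq]
    rw [show (0:ℕ)+1 = 1 from rfl, Finset.sum_range_one]
    have h11 : stirling 1 1 = 1 := rfl
    rw [h11, Nat.mul_one]
    have := bell_succ' j
    rw [show (0:ℕ) + 1 + j = j + 1 by omega, this]
    apply Finset.sum_congr rfl
    intro r _
    norm_num
  | succ n ih =>
    intro j
    rw [Icc_sum_eq]
    have step : ∀ k' ∈ Finset.range (n+2),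
        (∑ r ∈ Finset.range (j + 1), bell (j - r) * Nat.choose j r * (k'+1) ^ r)
          * stirling (n+2) (k'+1)
        = (∑ r ∈ Finset.range (j + 1), bell (j - r) * Nat.choose j r * (k'+1) ^ r)
            * stirling (n+1) k'
          + ((k'+1) * (∑ r ∈ Finset.range (j + 1), bell (j - r) * Nat.choose j r * (k'+1) ^ r))
            * stirling (n+1) (k'+1) := by
      intro k' _
      show _ * (stirling (n+1) k' + (k'+1) * stirling (n+1) (k'+1)) = _
      ring
    rw [Finset.sum_congr rfl step, Finset.sum_add_distrib]
    -- first sum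
    have firstsum : ∑ k' ∈ Finset.range (n+2),
        (∑ r ∈ Finset.range (j + 1), bell (j - r) * Nat.choose j r * (k'+1) ^ r)
          * stirling (n+1) k'
        = ∑ k' ∈ Finset.range (n+1),
            (∑ r ∈ Finset.range (j + 1), bell (j - r) * Nat.choose j r * ((k'+1)+1) ^ r)
              * stirling (n+1) (k'+1) := by
      rw [Finset.sum_range_succ' (fun k' =>
        (∑ r ∈ Finset.range (j + 1), bell (j - r) * Nat.choose j r * (k'+1) ^ r)
          * stirling (n+1) k'), stirling_succ_zero]
      simp
    -- second sum
    have secondsum : ∑ k' ∈ Finset.range (n+2),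
        ((k'+1) * (∑ r ∈ Finset.range (j + 1), bell (j - r) * Nat.choose j r * (k'+1) ^ r))
          * stirling (n+1) (k'+1)
        = ∑ k' ∈ Finset.range (n+1),
            ((k'+1) * (∑ r ∈ Finset.range (j + 1), bell (j - r) * Nat.choose j r * (k'+1) ^ r))
              * stirling (n+1) (k'+1) := by
      rw [Finset.sum_range_succ,
        stirling_eq_zero_of_lt (n+1) (n+2) (by omega), Nat.mul_zero, Nat.add_zero]
    rw [firstsum, secondsum, ← Finset.sum_add_distrib]
    have combine : ∀ k' ∈ Finset.range (n+1),
        (∑ r ∈ Finset.range (j + 1), bell (j - r) * Nat.choose j r * ((k'+1)+1) ^ r)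
            * stirling (n+1) (k'+1)
          + ((k'+1) * (∑ r ∈ Finset.range (j + 1), bell (j - r) * Nat.choose j r * (k'+1) ^ r))
            * stirling (n+1) (k'+1)
        = (∑ r ∈ Finset.range ((j+1) + 1), bell ((j+1) - r) * Nat.choose (j+1) r * (k'+1) ^ r)
            * stirling (n+1) (k'+1) := by
      intro k' _
      rw [show j + 1 + 1 = j + 2 by rfl, Ppoly_succ j (k'+1)]
      ring
    rw [Finset.sum_congr rfl combine, ← Icc_sum_eq (n+1)
      (fun k => (∑ r ∈ Finset.range ((j+1) + 1), bell ((j+1) - r) * Nat.choose (j+1) r * k ^ r)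
        * stirling (n+1) k), ih (j+1)]
    congr 1
    omega

theorem spivey_identity (n j : ℕ) (hn : 0 < n) (hj : 0 < j) :
    bell (n + j) =
      ∑ k ∈ Finset.Icc 1 n,
        (∑ r ∈ Finset.range (j + 1), bell (j - r) * Nat.choose j r * k ^ r) * stirling n k := by
  obtain ⟨m, rfl⟩ : ∃ m, n = m + 1 := ⟨n - 1, by omega⟩
  exact (spivey_main m j).symm
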